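/- For integers m, n with gcd(m, n) = 1 and 3 ∤ (m + n), the integers c = m² − mn + n² and b = n(2m − n) satisfy gcd(b, c) = 1. -/

import Mathlib

theorem stmt_6 (m n : ℤ) (hmn : Int.gcd m n = 1) (h3 : ¬ (3 : ℤ) ∣ m + n)
    (b c : ℤ) (hb : b = n * (2 * m - n)) (hc : c = m ^ 2 - m * n + n ^ 2) :
    Int.gcd b c = 1 := by
  by_contra hg
  obtain ⟨p, hp, hpd⟩ := Nat.exists_prime_and_dvd hg
  have hco : IsCoprime m n := Int.isCoprime_iff_gcd_eq_one.mpr hmn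
  have hP : Prime (p : ℤ) := Nat.prime_iff_prime_int.mp hp
  have hpb : (p : ℤ) ∣ b :=
    dvd_trans (Int.natCast_dvd_natCast.mpr hpd) (Int.gcd_dvd_left b c)
  have hpc : (p : ℤ) ∣ c :=
    dvd_trans (Int.natCast_dvd_natCast.mpr hpd) (Int.gcd_dvd_right b c)
  have hpn : ¬ (p : ℤ) ∣ n := by
    intro hn
    have hm2 : (p : ℤ) ∣ m ^ 2 := by
      have : m ^ 2 = c + m * n - n ^ 2 := by rw [hc]; ring
      rw [this]
      exact dvd_sub (dvd_add hpc (Dvd.dvd.mul_left hn m)) (dvd_pow hn (by norm_num))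
    have hm : (p : ℤ) ∣ m := hP.dvd_of_dvd_pow hm2
    exact hP.not_unit (hco.isUnit_of_dvd' hm hn)
  have hp2mn : (p : ℤ) ∣ 2 * m - n := by
    rcases hP.dvd_mul.mp (hb ▸ hpb) with h | h
    · exact absurd h hpn
    · exact h
  have hpm : ¬ (p : ℤ) ∣ m := by
    intro hm
    have hn : (p : ℤ) ∣ n := by
      have : n = 2 * m - (2 * m - n) := by ring
      rw [this]
      exact dvd_sub (Dvd.dvd.mul_left hm 2) hp2mn
    exact hP.not_unit (hco.isUnit_of_dvd' hm hn)
  have h3m2 : (p : ℤ) ∣ 3 * m ^ 2 := by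
    have : 3 * m ^ 2 = c + (2 * m - n) * (m + n) := by rw [hc]; ring
    rw [this]
    exact dvd_add hpc (Dvd.dvd.mul_right hp2mn _)
  have hp3 : (p : ℤ) ∣ 3 := by
    rcases hP.dvd_mul.mp h3m2 with h | h
    · exact h
    · exact absurd (hP.dvd_of_dvd_pow h) hpm
  have hpe : (p : ℤ) = 3 := by
    have h' : p ∣ 3 := by exact_mod_cast hp3
    have := (Nat.prime_dvd_prime_iff_eq hp (by norm_num)).mp h'
    exact_mod_cast congrArg (Nat.cast : ℕ → ℤ) this
  have h3c : (3 : ℤ) ∣ c := hpe ▸ hpc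
  have h3sq : (3 : ℤ) ∣ (m + n) ^ 2 := by
    have : (m + n) ^ 2 = c + 3 * (m * n) := by rw [hc]; ring
    rw [this]
    exact dvd_add h3c (Dvd.dvd.mul_right (dvd_refl 3) _)
  exact h3 ((Int.prime_three).dvd_of_dvd_pow h3sq)
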